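/- Let 𝔽_q be a finite field of odd characteristic, χ : 𝔽_q → ℂ a nontrivial additive character, and V = {x ∈ 𝔽_q⁴ : x₁² + x₂² + x₃² + x₄² = 0}. Then for every m ∈ 𝔽_q⁴ ∖ {0}: if m₁² + m₂² + m₃² + m₄² = 0 then Σ_{x∈V} χ(m·x) = q(q − 1), while if m₁² + m₂² + m₃² + m₄² ≠ 0 then Σ_{x∈V} χ(m·x) = −q. In particular, there exist m ≠ 0 with |V̂(m)| = (q−1)/q³ ∼ q^{−2} = q^{−d/2}, so the Fourier decay of V in even dimension d = 4 is strictly worse than q^{−(d+1)/2}. -/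

import Mathlib

open Finset AddChar

variable {F : Type} [Field F] [Fintype F] [DecidableEq F]

private noncomputable def eta (F : Type) [Field F] [Fintype F] [DecidableEq F] :
    MulChar F ℂ := (quadraticChar F).ringHomComp (Int.castRingHom ℂ)

private lemma eta_sq {t : F} (ht : t ≠ 0) : eta F t * eta F t = 1 := by
  have := quadraticChar_sq_one ht
  simp only [eta, MulChar.ringHomComp_apply]
  rw [← map_mul, ← pow_two, this]
  simp

private lemma eta_ne_one (hchar : ringChar F ≠ 2) : eta F ≠ 1 :=
  (MulChar.ringHomComp_ne_one_iff (RingHom.injective_int _)).mpr (quadraticChar_ne_one hchar)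

private lemma sum_chi_sq (hchar : ringChar F ≠ 2) (χ : AddChar F ℂ) (hχ : χ ≠ 1)
    {t : F} (ht : t ≠ 0) :
    ∑ y : F, χ (t * y ^ 2) = eta F t * gaussSum (eta F) χ := by
  have hprim : χ.IsPrimitive := AddChar.IsPrimitive.of_ne_one hχ
  have h1 : ∑ y : F, χ (t * y ^ 2)
      = ∑ u : F, ∑ _y ∈ univ.filter (fun y : F => y ^ 2 = u), χ (t * u) :=
    (Finset.sum_fiberwise' univ (fun y : F => y ^ 2) (fun u => χ (t * u))).symm
  have h2 : ∀ u : F, (#(univ.filter (fun y : F => y ^ 2 = u)) : ℤ)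
      = quadraticChar F u + 1 := by
    intro u
    have := quadraticChar_card_sqrts hchar u
    have hset : {x : F | x ^ 2 = u}.toFinset = univ.filter (fun y : F => y ^ 2 = u) := by
      ext x; simp [Set.mem_toFinset]
    rw [← hset]; exact this
  calc ∑ y : F, χ (t * y ^ 2)
      = ∑ u : F, (((quadraticChar F u : ℤ) + 1 : ℤ) : ℂ) * χ (t * u) := by
        rw [h1]
        refine Finset.sum_congr rfl fun u _ => ?_
        rw [Finset.sum_const, ← h2 u]
        push_cast
        ring
    _ = (∑ u : F, eta F u * χ (t * u)) + ∑ u : F, χ (t * u) := by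
        rw [← Finset.sum_add_distrib]
        refine Finset.sum_congr rfl fun u _ => ?_
        push_cast [eta, MulChar.ringHomComp_apply, Int.coe_castRingHom]
        ring
    _ = eta F t * gaussSum (eta F) χ := by
        have h0 : ∑ u : F, χ (t * u) = 0 := by
          have := AddChar.sum_mulShift t hprim
          simp only [if_neg ht, Nat.cast_zero] at this
          rw [← this]
          exact Finset.sum_congr rfl fun u _ => by rw [mul_comm]
        rw [h0, add_zero]
        have := gaussSum_mulShift (eta F) χ (Units.mk0 t ht)
        have h3 : gaussSum (eta F) (χ.mulShift t) = ∑ u : F, eta F u * χ (t * u) := rfl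
        rw [← this]
        simp only [Units.val_mk0, h3]
        rw [← mul_assoc, mul_comm (eta F t), mul_assoc]
        rw [← mul_assoc, eta_sq ht, one_mul]

private lemma addchar_sum {ι : Type*} (s : Finset ι) (χ : AddChar F ℂ) (f : ι → F) :
    χ (∑ i ∈ s, f i) = ∏ i ∈ s, χ (f i) := by
  induction s using Finset.cons_induction with
  | empty => simp
  | cons i s hi ih => rw [Finset.sum_cons, Finset.prod_cons, map_add_eq_mul, ih]

private lemma sum_chi_quad (hchar : ringChar F ≠ 2) (χ : AddChar F ℂ) (hχ : χ ≠ 1)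
    {t : F} (ht : t ≠ 0) (b : F) :
    ∑ y : F, χ (t * y ^ 2 + b * y)
      = χ (-(b ^ 2) / (4 * t)) * (eta F t * gaussSum (eta F) χ) := by
  have h2 : (2 : F) ≠ 0 := Ring.two_ne_zero hchar
  have h4 : (4 : F) ≠ 0 := by
    have : (4 : F) = 2 ^ 2 := by norm_num
    rw [this]; exact pow_ne_zero _ h2
  set c := b / (2 * t) with hc
  have hcomp := Equiv.sum_comp (Equiv.subRight c) (fun y : F => χ (t * y ^ 2 + b * y))
  rw [← hcomp]
  simp only [Equiv.subRight_apply]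
  have heq : ∀ y : F, t * (y - c) ^ 2 + b * (y - c) = (-(b ^ 2) / (4 * t)) + t * y ^ 2 := by
    intro y
    rw [hc]
    field_simp
    ring
  simp_rw [heq, map_add_eq_mul]
  rw [← Finset.mul_sum, sum_chi_sq hchar χ hχ ht]

private lemma gauss_pow_four (hchar : ringChar F ≠ 2) (χ : AddChar F ℂ) (hχ : χ ≠ 1) :
    gaussSum (eta F) χ ^ 4 = (Fintype.card F : ℂ) ^ 2 := by
  have hprim : χ.IsPrimitive := AddChar.IsPrimitive.of_ne_one hχ
  have hq := gaussSum_sq (eta_ne_one hchar) ((quadraticChar_isQuadratic F).comp _) hprim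
  have h1 : eta F (-1) * eta F (-1) = 1 := eta_sq (by
    simpa using (neg_ne_zero.mpr (one_ne_zero : (1:F) ≠ 0)))
  calc gaussSum (eta F) χ ^ 4 = (gaussSum (eta F) χ ^ 2) ^ 2 := by ring
    _ = (eta F (-1) * Fintype.card F) ^ 2 := by rw [hq]
    _ = (eta F (-1) * eta F (-1)) * (Fintype.card F : ℂ) ^ 2 := by ring
    _ = (Fintype.card F : ℂ) ^ 2 := by rw [h1, one_mul]

private lemma sum_chi_linear (χ : AddChar F ℂ) (hχ : χ ≠ 1) {m : Fin 4 → F} (hm : m ≠ 0) :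
    ∑ x : Fin 4 → F, χ (∑ i, m i * x i) = 0 := by
  have hprim : χ.IsPrimitive := AddChar.IsPrimitive.of_ne_one hχ
  obtain ⟨i, hi⟩ : ∃ i, m i ≠ 0 := by
    by_contra h; push_neg at h; exact hm (funext h)
  calc ∑ x : Fin 4 → F, χ (∑ i, m i * x i)
      = ∑ x : Fin 4 → F, ∏ i, χ (m i * x i) := by
        exact Finset.sum_congr rfl fun x _ => addchar_sum _ _ _
    _ = ∏ i, ∑ y : F, χ (m i * y) := (Fintype.prod_sum (fun i (y : F) => χ (m i * y))).symm
    _ = 0 := by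
        apply Finset.prod_eq_zero (Finset.mem_univ i)
        have := AddChar.sum_mulShift (m i) hprim
        simp only [if_neg hi, Nat.cast_zero] at this
        rw [← this]
        exact Finset.sum_congr rfl fun y _ => by rw [mul_comm]

private lemma sum_chi_quad4 (hchar : ringChar F ≠ 2) (χ : AddChar F ℂ) (hχ : χ ≠ 1)
    {t : F} (ht : t ≠ 0) (m : Fin 4 → F) :
    ∑ x : Fin 4 → F, χ (t * (∑ i, x i ^ 2) + ∑ i, m i * x i)
      = χ (-(∑ i, m i ^ 2) / (4 * t)) * (Fintype.card F : ℂ) ^ 2 := by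
  calc ∑ x : Fin 4 → F, χ (t * (∑ i, x i ^ 2) + ∑ i, m i * x i)
      = ∑ x : Fin 4 → F, ∏ i, χ (t * x i ^ 2 + m i * x i) := by
        refine Finset.sum_congr rfl fun x _ => ?_
        rw [← addchar_sum]
        congr 1
        rw [Finset.mul_sum, ← Finset.sum_add_distrib]
    _ = ∏ i, ∑ y : F, χ (t * y ^ 2 + m i * y) :=
        (Fintype.prod_sum (fun (i : Fin 4) (y : F) => χ (t * y ^ 2 + m i * y))).symm
    _ = ∏ i, (χ (-(m i ^ 2) / (4 * t)) * (eta F t * gaussSum (eta F) χ)) :=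
        Finset.prod_congr rfl fun i _ => sum_chi_quad hchar χ hχ ht (m i)
    _ = (∏ i, χ (-(m i ^ 2) / (4 * t))) * (eta F t * gaussSum (eta F) χ) ^ 4 := by
        rw [Finset.prod_mul_distrib, Finset.prod_const]
        simp
    _ = χ (-(∑ i, m i ^ 2) / (4 * t)) * (Fintype.card F : ℂ) ^ 2 := by
        have h1 : ∏ i, χ (-(m i ^ 2) / (4 * t)) = χ (-(∑ i, m i ^ 2) / (4 * t)) := by
          rw [← addchar_sum]
          congr 1
          simp only [neg_div]
          rw [Finset.sum_neg_distrib, Finset.sum_div]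
        have h2 : (eta F t * gaussSum (eta F) χ) ^ 4 = (Fintype.card F : ℂ) ^ 2 := by
          rw [mul_pow, gauss_pow_four hchar χ hχ]
          have : eta F t ^ 4 = (eta F t * eta F t) * (eta F t * eta F t) := by ring
          rw [this, eta_sq ht, one_mul, one_mul]
        rw [h1, h2]

/-- Let `𝔽_q` be a finite field of odd characteristic, `χ` a nontrivial additive
character, and `V = {x ∈ 𝔽_q⁴ : x₁² + x₂² + x₃² + x₄² = 0}`.  Then for every `m ≠ 0`: if
`m₁² + m₂² + m₃² + m₄² = 0` then `Σ_{x∈V} χ(m·x) = q(q − 1)`, while if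
`m₁² + m₂² + m₃² + m₄² ≠ 0` then `Σ_{x∈V} χ(m·x) = −q`.  In particular there exists `m ≠ 0`
with `|V̂(m)| = (q−1)/q³`, so the Fourier decay of `V` in even dimension `d = 4` is exactly of
order `q^{−d/2}`, strictly worse than `q^{−(d+1)/2}`. -/
theorem stmt_15 {F : Type} [Field F] [Fintype F] [DecidableEq F]
    (hchar : ringChar F ≠ 2)
    (χ : AddChar F ℂ) (hχ : χ ≠ 1)
    (V : Finset (Fin 4 → F)) (hV : ∀ x, x ∈ V ↔ ∑ i, x i ^ 2 = 0) :
    (∀ m : Fin 4 → F, m ≠ 0 →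
        ((∑ i, m i ^ 2 = 0 →
            ∑ x ∈ V, χ (∑ i, m i * x i)
              = (Fintype.card F : ℂ) * ((Fintype.card F : ℂ) - 1))
          ∧ (∑ i, m i ^ 2 ≠ 0 →
            ∑ x ∈ V, χ (∑ i, m i * x i) = -(Fintype.card F : ℂ))))
    ∧ ∃ m : Fin 4 → F, m ≠ 0 ∧
        ‖((Fintype.card F : ℂ))⁻¹ ^ 4 * ∑ x ∈ V, χ (-(∑ i, m i * x i))‖
          = ((Fintype.card F : ℝ) - 1) / (Fintype.card F : ℝ) ^ 3 := by
  have hq0 : (Fintype.card F : ℂ) ≠ 0 := Nat.cast_ne_zero.mpr Fintype.card_ne_zero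
  have h2 : (2 : F) ≠ 0 := Ring.two_ne_zero hchar
  have h4 : (4 : F) ≠ 0 := by
    have : (4 : F) = 2 ^ 2 := by norm_num
    rw [this]; exact pow_ne_zero _ h2
  have hprim : χ.IsPrimitive := AddChar.IsPrimitive.of_ne_one hχ
  have hVf : V = Finset.univ.filter (fun x : Fin 4 → F => ∑ i, x i ^ 2 = 0) := by
    ext x; simp [hV x]
  have main : ∀ m : Fin 4 → F, m ≠ 0 →
      ((∑ i, m i ^ 2 = 0 →
          ∑ x ∈ V, χ (∑ i, m i * x i)
            = (Fintype.card F : ℂ) * ((Fintype.card F : ℂ) - 1))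
        ∧ (∑ i, m i ^ 2 ≠ 0 →
          ∑ x ∈ V, χ (∑ i, m i * x i) = -(Fintype.card F : ℂ))) := by
    intro m hm
    have key : (Fintype.card F : ℂ) * ∑ x ∈ V, χ (∑ i, m i * x i)
        = ∑ t : F, ∑ x : Fin 4 → F, χ (t * (∑ i, x i ^ 2) + ∑ i, m i * x i) := by
      rw [Finset.sum_comm]
      symm
      calc ∑ x : Fin 4 → F, ∑ t : F, χ (t * (∑ i, x i ^ 2) + ∑ i, m i * x i)
          = ∑ x : Fin 4 → F,
              (if (∑ i, x i ^ 2) = 0 then (Fintype.card F : ℂ) else 0)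
                * χ (∑ i, m i * x i) := by
            refine Finset.sum_congr rfl fun x _ => ?_
            simp_rw [map_add_eq_mul]
            rw [← Finset.sum_mul]
            congr 1
            rw [AddChar.sum_mulShift _ hprim]
            split_ifs <;> simp
        _ = ∑ x ∈ V, (Fintype.card F : ℂ) * χ (∑ i, m i * x i) := by
            rw [hVf, Finset.sum_filter]
            refine Finset.sum_congr rfl fun x _ => ?_
            split_ifs <;> simp
        _ = (Fintype.card F : ℂ) * ∑ x ∈ V, χ (∑ i, m i * x i) := by
            rw [Finset.mul_sum]
    have split : ∑ t : F, ∑ x : Fin 4 → F, χ (t * (∑ i, x i ^ 2) + ∑ i, m i * x i)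
        = ∑ t ∈ Finset.univ \ {(0 : F)},
            χ (-(∑ i, m i ^ 2) / (4 * t)) * (Fintype.card F : ℂ) ^ 2 := by
      rw [Finset.sum_eq_sum_sdiff_singleton_add (Finset.mem_univ (0 : F))]
      have h0 : ∑ x : Fin 4 → F, χ ((0 : F) * (∑ i, x i ^ 2) + ∑ i, m i * x i) = 0 := by
        simp_rw [zero_mul, zero_add]
        exact sum_chi_linear χ hχ hm
      rw [h0, add_zero]
      refine Finset.sum_congr rfl fun t ht => ?_
      have ht0 : t ≠ 0 := by
        simp only [Finset.mem_sdiff, Finset.mem_singleton] at ht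
        exact ht.2
      exact sum_chi_quad4 hchar χ hχ ht0 m
    constructor
    · intro hQm
      have hsum : ∑ t ∈ Finset.univ \ {(0 : F)},
          χ (-(∑ i, m i ^ 2) / (4 * t)) * (Fintype.card F : ℂ) ^ 2
          = ((Fintype.card F : ℂ) - 1) * (Fintype.card F : ℂ) ^ 2 := by
        have : ∀ t ∈ Finset.univ \ {(0 : F)},
            χ (-(∑ i, m i ^ 2) / (4 * t)) * (Fintype.card F : ℂ) ^ 2
              = (Fintype.card F : ℂ) ^ 2 := by
          intro t _
          rw [hQm]
          simp
        rw [Finset.sum_congr rfl this, Finset.sum_const]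
        have hcard : #(Finset.univ \ {(0 : F)}) = Fintype.card F - 1 := by
          rw [Finset.card_sdiff_of_subset (by simp)]
          simp
        rw [hcard, nsmul_eq_mul]
        congr 1
        have h1 : (1 : ℕ) ≤ Fintype.card F := Fintype.card_pos
        push_cast [Nat.cast_sub h1]
        ring
      have : (Fintype.card F : ℂ) * ∑ x ∈ V, χ (∑ i, m i * x i)
          = (Fintype.card F : ℂ) * ((Fintype.card F : ℂ) * ((Fintype.card F : ℂ) - 1)) := by
        rw [key, split, hsum]; ring
      exact mul_left_cancel₀ hq0 this
    · intro hQm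
      have hbij : ∑ t ∈ Finset.univ \ {(0 : F)}, χ (-(∑ i, m i ^ 2) / (4 * t))
          = ∑ s ∈ Finset.univ \ {(0 : F)}, χ s := by
        refine Finset.sum_nbij' (fun t => -(∑ i, m i ^ 2) / (4 * t))
          (fun s => -(∑ i, m i ^ 2) / (4 * s)) ?_ ?_ ?_ ?_ ?_
        · intro t ht
          simp only [Finset.mem_sdiff, Finset.mem_singleton, Finset.mem_univ, true_and] at ht ⊢
          exact div_ne_zero (neg_ne_zero.mpr hQm) (mul_ne_zero h4 ht)
        · intro s hs
          simp only [Finset.mem_sdiff, Finset.mem_singleton, Finset.mem_univ, true_and] at hs ⊢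
          exact div_ne_zero (neg_ne_zero.mpr hQm) (mul_ne_zero h4 hs)
        · intro t ht
          simp only [Finset.mem_sdiff, Finset.mem_singleton, Finset.mem_univ, true_and] at ht
          field_simp
        · intro s hs
          simp only [Finset.mem_sdiff, Finset.mem_singleton, Finset.mem_univ, true_and] at hs
          field_simp
        · intro t _
          rfl
      have hsum0 : ∑ s ∈ Finset.univ \ {(0 : F)}, χ s = -1 := by
        have htot : ∑ s : F, χ s = 0 := AddChar.sum_eq_zero_of_ne_one hχ
        have := Finset.sum_eq_sum_sdiff_singleton_add (Finset.mem_univ (0 : F)) (fun s => χ s)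
        rw [htot] at this
        simp only [map_zero_eq_one] at this
        linear_combination -this
      have : (Fintype.card F : ℂ) * ∑ x ∈ V, χ (∑ i, m i * x i)
          = (Fintype.card F : ℂ) * (-(Fintype.card F : ℂ)) := by
        rw [key, split, ← Finset.sum_mul, hbij, hsum0]
        ring
      exact mul_left_cancel₀ hq0 this
  refine ⟨main, ?_⟩
  obtain ⟨a, b, hab⟩ := FiniteField.exists_root_sum_quadratic
      (f := Polynomial.X ^ 2) (g := Polynomial.X ^ 2 + Polynomial.C 1)
      (Polynomial.degree_X_pow 2) (Polynomial.degree_X_pow_add_C (by norm_num) 1)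
      (FiniteField.odd_card_of_char_ne_two hchar)
  have hab' : a ^ 2 + (b ^ 2 + 1) = 0 := by simpa using hab
  set m : Fin 4 → F := ![a, b, 1, 0] with hmdef
  have hm : m ≠ 0 := by
    intro h
    have h1 := congrFun h 2
    rw [hmdef] at h1
    simp at h1
  have hQm : ∑ i, m i ^ 2 = 0 := by
    rw [Fin.sum_univ_four, hmdef]
    simp only [Matrix.cons_val_zero, Matrix.cons_val_one, Matrix.head_cons,
      Matrix.cons_val_two, Matrix.tail_cons, Matrix.cons_val_three]
    linear_combination hab'
  refine ⟨m, hm, ?_⟩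
  have hnm : -m ≠ 0 := fun h => hm (by rw [← neg_neg m, h, neg_zero])
  have hQnm : ∑ i, (-m) i ^ 2 = 0 := by
    simp only [Pi.neg_apply, neg_sq]; exact hQm
  have hval := (main (-m) hnm).1 hQnm
  have hrw : ∀ x : Fin 4 → F, χ (-(∑ i, m i * x i)) = χ (∑ i, (-m) i * x i) := by
    intro x
    congr 1
    simp [Pi.neg_apply, neg_mul, Finset.sum_neg_distrib]
  simp_rw [hrw]
  rw [hval]
  have hq1 : (1 : ℕ) ≤ Fintype.card F := Fintype.card_pos
  have hqR : (0 : ℝ) < (Fintype.card F : ℝ) := Nat.cast_pos.mpr Fintype.card_pos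
  have hrepr : ((Fintype.card F : ℂ))⁻¹ ^ 4
        * ((Fintype.card F : ℂ) * ((Fintype.card F : ℂ) - 1))
      = ((((Fintype.card F : ℝ) - 1) / (Fintype.card F : ℝ) ^ 3 : ℝ) : ℂ) := by
    push_cast
    field_simp
  rw [hrepr, Complex.norm_real, Real.norm_eq_abs, abs_of_nonneg]
  apply div_nonneg _ (by positivity)
  have h1R : (1 : ℝ) ≤ (Fintype.card F : ℝ) := by exact_mod_cast hq1
  linarith
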